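/- For every pair x ≠ y in X, with r = d_h(x,y) ≥ 1, and every t ≥ 0, the off-diagonal heat kernel of the hierarchical Laplacian equals p(t,x,y) = −e^{−p^{r−1} t}/ν^r + (1 − 1/ν) Σ_{s=r}^∞ e^{−p^s t}/ν^s. -/

import Mathlib

noncomputable section
open scoped ENNReal

def HX (ν : ℕ) : Type := {x : ℕ → Fin ν // ∃ N, ∀ n, N ≤ n → (x n : ℕ) = 0}
instance (ν : ℕ) : DecidableEq (HX ν) := Classical.decEq _
abbrev Hl2 (ν : ℕ) : Type := lp (fun _ : HX ν => ℝ) 2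
def cube (ν : ℕ) (r : ℕ) (x : HX ν) : Set (HX ν) := {y | ∀ n, r ≤ n → y.1 n = x.1 n}
/-- Hierarchical distance `d_h(x,y) = min {r ≥ 0 : y ∈ Q^{(r)}(x)}`. -/
def dh (ν : ℕ) (x y : HX ν) : ℕ := sInf {r : ℕ | y ∈ cube ν r x}
def hdelta (ν : ℕ) (x : HX ν) : Hl2 ν := lp.single 2 x 1
def cubeSum (ν r : ℕ) (x : HX ν) (ψ : Hl2 ν) : ℝ := ∑' y : cube ν r x, ψ y
def IsHierLap (ν : ℕ) (p : ℝ) (Δ : Hl2 ν →L[ℝ] Hl2 ν) : Prop :=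
  ∀ ψ x, Δ ψ x = ∑' r : ℕ,
    (1 - p) * p ^ r * (((ν : ℝ) ^ (r + 1))⁻¹ * cubeSum ν (r + 1) x ψ - ψ x)

/-- Heat kernel `p(t,x,y) = ⟨exp(tΔ_h) δ_y, δ_x⟩`. -/
def heatK (ν : ℕ) (Δ : Hl2 ν →L[ℝ] Hl2 ν) (t : ℝ) (x y : HX ν) : ℝ :=
  @inner ℝ _ _ (NormedSpace.exp (t • Δ) (hdelta ν y)) (hdelta ν x)

namespace Stmt6

variable {ν : ℕ}

lemma self_mem_cube (r : ℕ) (x : HX ν) : x ∈ cube ν r x := fun _ _ => rfl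

lemma cube_mono {r r' : ℕ} (h : r ≤ r') (x : HX ν) : cube ν r x ⊆ cube ν r' x :=
  fun _ hz n hn => hz n (h.trans hn)

lemma mem_cube_symm {r : ℕ} {x y : HX ν} (h : x ∈ cube ν r y) : y ∈ cube ν r x :=
  fun n hn => (h n hn).symm

lemma mem_cube_trans {r : ℕ} {x y z : HX ν} (h1 : x ∈ cube ν r y) (h2 : y ∈ cube ν r z) :
    x ∈ cube ν r z := fun n hn => (h1 n hn).trans (h2 n hn)

lemma cube_eq_of_mem {r : ℕ} {y z : HX ν} (h : z ∈ cube ν r y) : cube ν r z = cube ν r y :=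
  Set.ext fun u => ⟨fun hu => mem_cube_trans hu h, fun hu => mem_cube_trans hu (mem_cube_symm h)⟩

lemma cube_zero (x : HX ν) : cube ν 0 x = {x} := by
  ext z
  constructor
  · intro h
    exact Subtype.ext (funext fun n => h n (Nat.zero_le n))
  · intro h
    subst h
    exact self_mem_cube 0 _

def cubeEquiv (r : ℕ) (x : HX ν) : cube ν r x ≃ (Fin r → Fin ν) where
  toFun z i := z.1.1 i.1
  invFun f :=
    ⟨⟨fun n => if h : n < r then f ⟨n, h⟩ else x.1 n, by
        obtain ⟨N, hN⟩ := x.2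
        refine ⟨max r N, fun n hn => ?_⟩
        show ((if h : n < r then f ⟨n, h⟩ else x.1 n : Fin ν) : ℕ) = 0
        rw [dif_neg (not_lt.2 ((le_max_left r N).trans hn))]
        exact hN n ((le_max_right r N).trans hn)⟩,
      fun n hn => dif_neg (not_lt.2 hn)⟩
  left_inv z := by
    apply Subtype.ext; apply Subtype.ext; funext n
    by_cases h : n < r
    · simp [dif_pos h]
    · simp only [dif_neg h]
      exact (z.2 n (not_lt.1 h)).symm
  right_inv f := by
    funext i
    simp

instance (r : ℕ) (x : HX ν) : Fintype (cube ν r x) :=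
  Fintype.ofEquiv _ (cubeEquiv r x).symm

lemma card_cube (r : ℕ) (x : HX ν) : Fintype.card (cube ν r x) = ν ^ r := by
  rw [Fintype.card_congr (cubeEquiv r x)]
  simp

/-- coordinate function of the normalized indicator of `cube ν s y`. -/
def chiF (s : ℕ) (y : HX ν) : HX ν → ℝ :=
  (cube ν s y).indicator fun _ => ((ν : ℝ) ^ s)⁻¹

lemma chiF_of_mem {s : ℕ} {y u : HX ν} (h : u ∈ cube ν s y) :
    chiF s y u = ((ν : ℝ) ^ s)⁻¹ := Set.indicator_of_mem h _

lemma chiF_of_not_mem {s : ℕ} {y u : HX ν} (h : u ∉ cube ν s y) :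
    chiF s y u = 0 := Set.indicator_of_notMem h _

lemma chiF_ne_finset_zero (s : ℕ) (y : HX ν) :
    ∀ u ∉ (cube ν s y).toFinset, chiF s y u = 0 := by
  intro u hu
  rw [Set.mem_toFinset] at hu
  exact chiF_of_not_mem hu

lemma summable_chiF (s : ℕ) (y : HX ν) : Summable (chiF s y) :=
  summable_of_ne_finset_zero (chiF_ne_finset_zero s y)

lemma memℓp_chiF (s : ℕ) (y : HX ν) : Memℓp (chiF s y) 2 := by
  apply memℓp_gen
  apply summable_of_ne_finset_zero (s := (cube ν s y).toFinset)
  intro u hu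
  rw [chiF_ne_finset_zero s y u hu]
  simp [Real.rpow_natCast]

def Vlp (s : ℕ) (y : HX ν) : Hl2 ν := ⟨chiF s y, memℓp_chiF s y⟩

lemma Vlp_apply (s : ℕ) (y : HX ν) (u : HX ν) : Vlp s y u = chiF s y u := rfl

def Wlp (s : ℕ) (y : HX ν) : Hl2 ν := Vlp s y - Vlp (s + 1) y

lemma Wlp_apply (s : ℕ) (y : HX ν) (u : HX ν) :
    Wlp s y u = chiF s y u - chiF (s + 1) y u := by
  rw [Wlp, lp.coeFn_sub, Pi.sub_apply, Vlp_apply, Vlp_apply]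

lemma tsum_chiF (hν : 2 ≤ ν) (s : ℕ) (y : HX ν) : ∑' u, chiF s y u = 1 := by
  have hνpos : (0 : ℝ) < (ν : ℝ) := by
    have : 0 < ν := lt_of_lt_of_le (by norm_num) hν
    exact_mod_cast this
  have hν0 : ((ν : ℝ) ^ s) ≠ 0 := by positivity
  rw [tsum_eq_sum (chiF_ne_finset_zero s y)]
  have : ∀ u ∈ (cube ν s y).toFinset, chiF s y u = ((ν : ℝ) ^ s)⁻¹ := by
    intro u hu
    exact chiF_of_mem (Set.mem_toFinset.1 hu)
  rw [Finset.sum_congr rfl this, Finset.sum_const, Set.toFinset_card, card_cube,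
    nsmul_eq_mul, Nat.cast_pow]
  exact mul_inv_cancel₀ hν0

lemma nu_pos (hν : 2 ≤ ν) : (0 : ℝ) < (ν : ℝ) := by
  have : 0 < ν := lt_of_lt_of_le (by norm_num) hν
  exact_mod_cast this

lemma cubeSum_eq_sum (m : ℕ) (z : HX ν) (ψ : Hl2 ν) :
    cubeSum ν m z ψ = ∑ u : cube ν m z, ψ u.1 := tsum_fintype _

lemma mem_cube_iff_of_mem {m s : ℕ} (hms : m ≤ s) {z u : HX ν} (hu : u ∈ cube ν m z)
    (y : HX ν) : u ∈ cube ν s y ↔ z ∈ cube ν s y := by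
  have hu' : u ∈ cube ν s z := cube_mono hms z hu
  constructor
  · intro h
    exact mem_cube_trans (mem_cube_symm hu') h
  · intro h
    exact mem_cube_trans hu' h

lemma Wlp_const_on_cube {m s : ℕ} (hms : m ≤ s) {z u : HX ν} (hu : u ∈ cube ν m z)
    (y : HX ν) : Wlp s y u = Wlp s y z := by
  rw [Wlp_apply, Wlp_apply]
  have h1 := mem_cube_iff_of_mem hms hu y
  have h2 := mem_cube_iff_of_mem (hms.trans (Nat.le_succ s)) hu y
  by_cases hz1 : z ∈ cube ν s y
  · rw [chiF_of_mem (h1.2 hz1), chiF_of_mem hz1,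
      chiF_of_mem (h2.2 (cube_mono (Nat.le_succ s) y hz1)),
      chiF_of_mem (cube_mono (Nat.le_succ s) y hz1)]
  · rw [chiF_of_not_mem (fun hc => hz1 (h1.1 hc)), chiF_of_not_mem hz1]
    by_cases hz2 : z ∈ cube ν (s + 1) y
    · rw [chiF_of_mem (h2.2 hz2), chiF_of_mem hz2]
    · rw [chiF_of_not_mem (fun hc => hz2 (h2.1 hc)), chiF_of_not_mem hz2]

lemma tsum_Wlp (hν : 2 ≤ ν) (s : ℕ) (y : HX ν) : ∑' u, Wlp s y u = 0 := by
  have : ∀ u, Wlp s y u = chiF s y u - chiF (s + 1) y u := Wlp_apply s y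
  rw [tsum_congr this, Summable.tsum_sub (summable_chiF s y) (summable_chiF (s + 1) y),
    tsum_chiF hν s y, tsum_chiF hν (s + 1) y, sub_self]

lemma support_Wlp (s : ℕ) (y : HX ν) :
    Function.support (fun u => Wlp s y u) ⊆ cube ν (s + 1) y := by
  intro u hu
  by_contra h
  have h' : u ∉ cube ν s y := fun hc => h (cube_mono (Nat.le_succ s) y hc)
  have : Wlp s y u = 0 := by rw [Wlp_apply, chiF_of_not_mem h, chiF_of_not_mem h', sub_zero]
  exact hu this

lemma cubeSum_Wlp (hν : 2 ≤ ν) (m s : ℕ) (z y : HX ν) :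
    cubeSum ν m z (Wlp s y) = if m ≤ s then (ν : ℝ) ^ m * Wlp s y z else 0 := by
  rcases le_or_gt m s with hms | hsm
  · rw [if_pos hms, cubeSum_eq_sum]
    trans ∑ _u : cube ν m z, Wlp s y z
    · exact Finset.sum_congr rfl (fun u _ => Wlp_const_on_cube hms u.2 y)
    · rw [Finset.sum_const, Finset.card_univ, card_cube, nsmul_eq_mul, Nat.cast_pow]
  · rw [if_neg (not_le.2 hsm)]
    by_cases hy : y ∈ cube ν m z
    · have hsupp : Function.support (fun u => Wlp s y u) ⊆ cube ν m z := by
        refine (support_Wlp s y).trans ?_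
        rw [← cube_eq_of_mem hy]
        exact cube_mono hsm y
      rw [cubeSum, tsum_subtype_eq_of_support_subset hsupp, tsum_Wlp hν s y]
    · rw [cubeSum]
      have hz : ∀ u : cube ν m z, Wlp s y u.1 = 0 := by
        intro u
        have hs1 : u.1 ∉ cube ν (s + 1) y := by
          intro hc
          apply hy
          have h1 : u.1 ∈ cube ν m y := cube_mono hsm y hc
          rw [← cube_eq_of_mem u.2]
          exact mem_cube_symm h1
        have hs0 : u.1 ∉ cube ν s y := fun hc => hs1 (cube_mono (Nat.le_succ s) y hc)
        rw [Wlp_apply, chiF_of_not_mem hs0, chiF_of_not_mem hs1, sub_zero]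
      rw [tsum_congr hz, tsum_zero]

lemma Delta_Wlp (hν : 2 ≤ ν) {p : ℝ} (hp0 : 0 < p) (hp1 : p < 1)
    {Δ : Hl2 ν →L[ℝ] Hl2 ν} (hΔ : IsHierLap ν p Δ) (s : ℕ) (y : HX ν) :
    Δ (Wlp s y) = (-(p ^ s)) • Wlp s y := by
  have hp' : (1 : ℝ) - p ≠ 0 := by linarith
  have hνne : ∀ m : ℕ, ((ν : ℝ) ^ m) ≠ 0 := fun m => by
    have := nu_pos (ν := ν) hν
    positivity
  apply lp.ext
  funext z
  set c := Wlp s y z with hc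
  have hterm : ∀ r : ℕ,
      (1 - p) * p ^ r * (((ν : ℝ) ^ (r + 1))⁻¹ * cubeSum ν (r + 1) z (Wlp s y) - Wlp s y z)
        = if r < s then 0 else -((1 - p) * p ^ r * c) := by
    intro r
    rw [cubeSum_Wlp hν]
    by_cases h : r < s
    · rw [if_pos (Nat.succ_le_of_lt h), if_pos h, ← hc, inv_mul_cancel_left₀ (hνne (r + 1)),
        sub_self, mul_zero]
    · rw [if_neg (fun hc' => h (Nat.lt_of_succ_le hc')), if_neg h, ← hc, mul_zero, zero_sub]
      ring
  have hsum : Summable fun r : ℕ => if r < s then 0 else -((1 - p) * p ^ r * c) := by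
    apply Summable.of_norm_bounded (g := fun r => (|(1 - p) * c|) * p ^ r)
      ((summable_geometric_of_lt_one hp0.le hp1).mul_left _)
    intro r
    by_cases h : r < s
    · rw [if_pos h]
      simp only [norm_zero]
      positivity
    · rw [if_neg h]
      rw [Real.norm_eq_abs, abs_neg]
      have : |(1 - p) * p ^ r * c| = |(1 - p) * c| * p ^ r := by
        rw [abs_mul, abs_mul, abs_mul, abs_of_nonneg (pow_nonneg hp0.le r)]
        ring
      rw [this]
  have hDz : Δ (Wlp s y) z = ∑' r : ℕ, if r < s then 0 else -((1 - p) * p ^ r * c) := by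
    rw [hΔ (Wlp s y) z, tsum_congr hterm]
  rw [hDz, lp.coeFn_smul, Pi.smul_apply, smul_eq_mul, ← hc]
  rw [← Summable.sum_add_tsum_nat_add s hsum]
  have h1 : (∑ i ∈ Finset.range s, if i < s then (0:ℝ) else -((1 - p) * p ^ i * c)) = 0 :=
    Finset.sum_eq_zero fun i hi => if_pos (Finset.mem_range.1 hi)
  have h2 : ∀ i : ℕ, (if i + s < s then (0:ℝ) else -((1 - p) * p ^ (i + s) * c))
      = (-((1 - p) * p ^ s * c)) * p ^ i := by
    intro i
    rw [if_neg (by omega), pow_add]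
    ring
  rw [h1, zero_add, tsum_congr h2, tsum_mul_left,
    tsum_geometric_of_lt_one hp0.le hp1]
  field_simp

lemma exp_eigen {E : Type*} [NormedAddCommGroup E] [NormedSpace ℝ E] [CompleteSpace E]
    {A : E →L[ℝ] E} {c : ℝ} {w : E} (h : A w = c • w) :
    NormedSpace.exp A w = Real.exp c • w := by
  have hpow : ∀ n : ℕ, (A ^ n) w = c ^ n • w := by
    intro n
    induction n with
    | zero => simp
    | succ m ih =>
      rw [pow_succ, ContinuousLinearMap.mul_apply, h, map_smul, ih, smul_smul, pow_succ,
        mul_comm]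
  have h1 : HasSum (fun n : ℕ => (((Nat.factorial n : ℝ))⁻¹ * c ^ n) • w) (Real.exp c • w) := by
    have hc : HasSum (fun n : ℕ => ((Nat.factorial n : ℝ))⁻¹ • c ^ n) (NormedSpace.exp c) := by
      rw [NormedSpace.exp_eq_tsum ℝ]
      exact (NormedSpace.expSeries_summable' (𝕂 := ℝ) c).hasSum
    have h' := hc.smul_const w
    rw [← Real.exp_eq_exp_ℝ] at h'
    simpa [smul_eq_mul] using h'
  have h2 : HasSum (fun n : ℕ => (((Nat.factorial n : ℝ))⁻¹ • A ^ n) w)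
      ((∑' n : ℕ, ((Nat.factorial n : ℝ))⁻¹ • A ^ n) w) :=
    (NormedSpace.expSeries_summable' (𝕂 := ℝ) A).hasSum.mapL
      (ContinuousLinearMap.apply ℝ E w)
  have h3 : (fun n : ℕ => (((Nat.factorial n : ℝ))⁻¹ • A ^ n) w)
      = fun n : ℕ => (((Nat.factorial n : ℝ))⁻¹ * c ^ n) • w := by
    funext n
    rw [ContinuousLinearMap.smul_apply, hpow n, smul_smul]
  rw [h3] at h2
  have := h2.unique h1
  rw [NormedSpace.exp_eq_tsum ℝ]
  exact this

lemma sqrt_pow' (x : ℝ) (hx : 0 ≤ x) (n : ℕ) :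
    Real.sqrt (x ^ n) = Real.sqrt x ^ n := by
  induction n with
  | zero => simp
  | succ m ih => rw [pow_succ, pow_succ, Real.sqrt_mul (pow_nonneg hx m), ih]

lemma inner_self_Vlp (hν : 2 ≤ ν) (s : ℕ) (y : HX ν) :
    @inner ℝ _ _ (Vlp s y) (Vlp s y) = ((ν : ℝ)⁻¹) ^ s := by
  have hνne : ((ν : ℝ) ^ s) ≠ 0 := by
    have := nu_pos (ν := ν) hν
    positivity
  rw [lp.inner_eq_tsum]
  have h0 : ∀ u, @inner ℝ _ _ (Vlp s y u) (Vlp s y u) = chiF s y u * chiF s y u :=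
    fun u => rfl
  rw [tsum_congr h0, tsum_eq_sum (s := (cube ν s y).toFinset)
    (fun u hu => by rw [chiF_ne_finset_zero s y u hu, mul_zero])]
  trans ∑ _u ∈ (cube ν s y).toFinset, ((ν : ℝ) ^ s)⁻¹ * ((ν : ℝ) ^ s)⁻¹
  · exact Finset.sum_congr rfl fun u hu => by rw [chiF_of_mem (Set.mem_toFinset.1 hu)]
  rw [Finset.sum_const, Set.toFinset_card, card_cube, nsmul_eq_mul, Nat.cast_pow, inv_pow]
  field_simp

lemma norm_Vlp (hν : 2 ≤ ν) (s : ℕ) (y : HX ν) :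
    ‖Vlp s y‖ = Real.sqrt ((ν : ℝ)⁻¹) ^ s := by
  have h := real_inner_self_eq_norm_sq (Vlp s y)
  rw [inner_self_Vlp hν] at h
  have h2 : Real.sqrt (((ν : ℝ)⁻¹) ^ s) = ‖Vlp s y‖ := by
    rw [h, Real.sqrt_sq (norm_nonneg _)]
  rw [← h2, sqrt_pow' _ (by positivity)]

lemma sqrtq_lt_one (hν : 2 ≤ ν) : Real.sqrt ((ν : ℝ)⁻¹) < 1 := by
  have hνpos := nu_pos (ν := ν) hν
  have hν1 : (1 : ℝ) < (ν : ℝ) := by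
    have : 1 < ν := lt_of_lt_of_le (by norm_num) hν
    exact_mod_cast this
  rw [show (1 : ℝ) = Real.sqrt 1 by simp]
  exact Real.sqrt_lt_sqrt (by positivity) (by rw [inv_lt_one_iff₀]; right; exact hν1)

lemma summable_Wlp (hν : 2 ≤ ν) (y : HX ν) : Summable fun s => Wlp s y := by
  set q := Real.sqrt ((ν : ℝ)⁻¹) with hq
  have hq0 : 0 ≤ q := Real.sqrt_nonneg _
  have hq1 : q < 1 := sqrtq_lt_one hν
  apply Summable.of_norm_bounded (g := fun s => q ^ s + q * q ^ s)
    ((summable_geometric_of_lt_one hq0 hq1).add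
      ((summable_geometric_of_lt_one hq0 hq1).mul_left q))
  intro s
  refine (norm_sub_le _ _).trans ?_
  rw [norm_Vlp hν, norm_Vlp hν]
  apply le_of_eq
  rw [← hq]
  ring

lemma Vlp_zero (y : HX ν) : Vlp 0 y = hdelta ν y := by
  apply lp.ext
  funext u
  rw [Vlp_apply, hdelta]
  by_cases h : u = y
  · subst h
    rw [chiF_of_mem (self_mem_cube 0 u), lp.single_apply_self]
    simp
  · rw [chiF_of_not_mem (by rw [cube_zero]; exact h), lp.single_apply_ne 2 y 1 h]

lemma hasSum_Wlp_delta (hν : 2 ≤ ν) (y : HX ν) :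
    HasSum (fun s => Wlp s y) (hdelta ν y) := by
  obtain ⟨L, hL⟩ := summable_Wlp hν y
  have htend := hL.tendsto_sum_nat
  have hpart : (fun n => ∑ i ∈ Finset.range n, Wlp i y)
      = fun n => Vlp 0 y - Vlp n y := by
    funext n
    exact Finset.sum_range_sub' (fun i => Vlp i y) n
  rw [hpart] at htend
  have hVto : Filter.Tendsto (fun n => Vlp n y) Filter.atTop (nhds 0) := by
    rw [tendsto_zero_iff_norm_tendsto_zero]
    have he : (fun n => ‖Vlp n y‖) = fun n => (Real.sqrt ((ν : ℝ)⁻¹)) ^ n :=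
      funext fun n => norm_Vlp hν n y
    rw [he]
    exact tendsto_pow_atTop_nhds_zero_of_lt_one (Real.sqrt_nonneg _) (sqrtq_lt_one hν)
  have htend2 : Filter.Tendsto (fun n => Vlp 0 y - Vlp n y) Filter.atTop
      (nhds (Vlp 0 y - 0)) := Filter.Tendsto.sub tendsto_const_nhds hVto
  have hLeq : L = Vlp 0 y - 0 := tendsto_nhds_unique htend htend2
  rw [sub_zero, Vlp_zero] at hLeq
  rw [← hLeq]
  exact hL

lemma dh_set_nonempty (x y : HX ν) : {r : ℕ | y ∈ cube ν r x}.Nonempty := by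
  obtain ⟨N1, h1⟩ := x.2
  obtain ⟨N2, h2⟩ := y.2
  refine ⟨max N1 N2, fun n hn => ?_⟩
  have e1 : (x.1 n : ℕ) = 0 := h1 n ((le_max_left N1 N2).trans hn)
  have e2 : (y.1 n : ℕ) = 0 := h2 n ((le_max_right N1 N2).trans hn)
  exact Fin.ext (e2.trans e1.symm)

lemma dh_spec (x y : HX ν) (s : ℕ) : x ∈ cube ν s y ↔ dh ν x y ≤ s := by
  constructor
  · intro h
    exact Nat.sInf_le (mem_cube_symm h)
  · intro h
    have hmem : y ∈ cube ν (dh ν x y) x := Nat.sInf_mem (dh_set_nonempty x y)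
    exact mem_cube_symm (cube_mono h x hmem)

lemma dh_pos {x y : HX ν} (hxy : x ≠ y) : 1 ≤ dh ν x y := by
  by_contra h
  have h0 : dh ν x y ≤ 0 := by omega
  have := (dh_spec x y 0).2 h0
  rw [cube_zero] at this
  exact hxy this

end Stmt6

theorem stmt6 (ν : ℕ) (hν : 2 ≤ ν) (p : ℝ) (hp0 : 0 < p) (hp1 : p < 1)
    (Δ : Hl2 ν →L[ℝ] Hl2 ν) (hΔ : IsHierLap ν p Δ) :
    ∀ x y : HX ν, x ≠ y → ∀ t : ℝ, 0 ≤ t →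
      heatK ν Δ t x y =
        -(Real.exp (-(p ^ (dh ν x y - 1) * t)) / (ν : ℝ) ^ dh ν x y) +
        (1 - (ν : ℝ)⁻¹) *
          ∑' s : ℕ, Real.exp (-(p ^ (dh ν x y + s) * t)) / (ν : ℝ) ^ (dh ν x y + s) := by
  intro x y hxy t ht
  open Stmt6 in
  set r := dh ν x y with hrdef
  have hmem : ∀ s, x ∈ cube ν s y ↔ r ≤ s := fun s => Stmt6.dh_spec x y s
  have hr1 : 1 ≤ r := Stmt6.dh_pos hxy
  have hνpos : (0 : ℝ) < (ν : ℝ) := Stmt6.nu_pos hν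
  have hνne : ∀ m : ℕ, ((ν : ℝ) ^ m) ≠ 0 := fun m => by positivity
  -- eigenvector property for t • Δ
  have heig : ∀ s : ℕ, NormedSpace.exp (t • Δ) (Stmt6.Wlp s y)
      = Real.exp (-(p ^ s * t)) • Stmt6.Wlp s y := by
    intro s
    apply Stmt6.exp_eigen
    rw [ContinuousLinearMap.smul_apply, Stmt6.Delta_Wlp hν hp0 hp1 hΔ s y, smul_smul]
    congr 1
    ring
  have hsum1 : HasSum (fun s => Real.exp (-(p ^ s * t)) • Stmt6.Wlp s y)
      (NormedSpace.exp (t • Δ) (hdelta ν y)) := by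
    have h := (Stmt6.hasSum_Wlp_delta hν y).mapL (NormedSpace.exp (t • Δ))
    have he : (fun s => NormedSpace.exp (t • Δ) (Stmt6.Wlp s y))
        = fun s => Real.exp (-(p ^ s * t)) • Stmt6.Wlp s y := funext heig
    rwa [he] at h
  have hsum2 : HasSum (fun s => Real.exp (-(p ^ s * t)) * (Stmt6.Wlp s y x))
      (heatK ν Δ t x y) := by
    have h := hsum1.mapL (innerSL ℝ (hdelta ν x))
    have he : (fun s => (innerSL ℝ (hdelta ν x)) (Real.exp (-(p ^ s * t)) • Stmt6.Wlp s y))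
        = fun s => Real.exp (-(p ^ s * t)) * (Stmt6.Wlp s y x) := by
      funext s
      rw [innerSL_apply_apply, real_inner_smul_right]
      congr 1
      rw [hdelta, lp.inner_single_left]
      simp
    rw [he] at h
    have hk : (innerSL ℝ (hdelta ν x)) (NormedSpace.exp (t • Δ) (hdelta ν y))
        = heatK ν Δ t x y := by
      rw [innerSL_apply_apply, heatK, real_inner_comm]
    rwa [hk] at h
  have hW : ∀ s : ℕ, Stmt6.Wlp s y x
      = (if r ≤ s then ((ν : ℝ) ^ s)⁻¹ else 0)
        - (if r ≤ s + 1 then ((ν : ℝ) ^ (s + 1))⁻¹ else 0) := by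
    intro s
    rw [Stmt6.Wlp_apply]
    congr 1
    · by_cases h : r ≤ s
      · rw [if_pos h, Stmt6.chiF_of_mem ((hmem s).2 h)]
      · rw [if_neg h, Stmt6.chiF_of_not_mem (fun hc => h ((hmem s).1 hc))]
    · by_cases h : r ≤ s + 1
      · rw [if_pos h, Stmt6.chiF_of_mem ((hmem (s + 1)).2 h)]
      · rw [if_neg h, Stmt6.chiF_of_not_mem (fun hc => h ((hmem (s + 1)).1 hc))]
  have hK : heatK ν Δ t x y
      = ∑' s : ℕ, Real.exp (-(p ^ s * t)) * (Stmt6.Wlp s y x) := hsum2.tsum_eq.symm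
  rw [hK, ← Summable.sum_add_tsum_nat_add r hsum2.summable]
  have hfin : (∑ i ∈ Finset.range r, Real.exp (-(p ^ i * t)) * (Stmt6.Wlp i y x))
      = -(Real.exp (-(p ^ (r - 1) * t)) / (ν : ℝ) ^ r) := by
    rw [Finset.sum_eq_single_of_mem (r - 1) (Finset.mem_range.2 (by omega))]
    · rw [hW (r - 1), if_neg (by omega), if_pos (by omega), zero_sub,
        show r - 1 + 1 = r by omega, mul_neg, div_eq_mul_inv]
    · intro i hi hne
      rw [hW i, if_neg (by
          rw [Finset.mem_range] at hi
          omega),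
        if_neg (by
          rw [Finset.mem_range] at hi
          omega), sub_zero, mul_zero]
  have htail : ∀ i : ℕ, Real.exp (-(p ^ (i + r) * t)) * (Stmt6.Wlp (i + r) y x)
      = (1 - (ν : ℝ)⁻¹) * (Real.exp (-(p ^ (r + i) * t)) / (ν : ℝ) ^ (r + i)) := by
    intro i
    rw [hW (i + r), if_pos (by omega), if_pos (by omega), add_comm i r, pow_succ, mul_inv,
      div_eq_mul_inv]
    have : ((ν : ℝ) ^ (r + i))⁻¹ - ((ν : ℝ) ^ (r + i))⁻¹ * ((ν : ℝ))⁻¹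
        = ((ν : ℝ) ^ (r + i))⁻¹ * (1 - (ν : ℝ)⁻¹) := by ring
    rw [this]
    ring
  rw [hfin, tsum_congr htail, tsum_mul_left]
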